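/- Let T* be a minimum spanning tree of a finite weighted graph with edge costs c, and T any other spanning tree of the same graph. Then there exists a bijection ψ from the edges of T* to the edges of T such that for every edge e of T*, (T* ∪ {ψ(e)}) \ {e} is a spanning tree, and consequently the product of the edge costs of T* is at most the product of the edge costs of T (assuming all costs are positive). -/

import Mathlib

set_option linter.unusedSectionVars false
set_option maxHeartbeats 1000000

open SimpleGraph Finset

section Helpers

variable {V : Type*} [Fintype V] [DecidableEq V]

/-- abbreviation -/
private def HG (E : Finset (Sym2 V)) : SimpleGraph V := SimpleGraph.fromEdgeSet (↑E : Set (Sym2 V))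

lemma HG_adj {E : Finset (Sym2 V)} {a b : V} : (HG E).Adj a b ↔ s(a,b) ∈ E ∧ a ≠ b := by
  simp [HG]

lemma HG_mono {E E' : Finset (Sym2 V)} (h : E ⊆ E') : HG E ≤ HG E' := by
  intro a b hab
  rw [HG_adj] at hab ⊢
  exact ⟨h hab.1, hab.2⟩

lemma HG_edgeSet {E : Finset (Sym2 V)} (hnd : ∀ x ∈ E, ¬ x.IsDiag) :
    (HG E).edgeSet = (↑E : Set (Sym2 V)) := by
  rw [HG, edgeSet_fromEdgeSet]
  ext x
  simp only [Set.mem_diff, Finset.mem_coe, Set.mem_setOf_eq, and_iff_left_iff_imp]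
  exact hnd x

/-- every vertex is, after deleting an edge, reachable from an end of a walk or
an endpoint of the deleted edge -/
lemma walk_cases {E : Finset (Sym2 V)} {u v w x : V}
    (p : (HG E).Walk w x) :
    (HG (E.erase s(u,v))).Reachable w x ∨
    ((HG (E.erase s(u,v))).Reachable w u ∧ (HG (E.erase s(u,v))).Reachable v x) ∨
    ((HG (E.erase s(u,v))).Reachable w v ∧ (HG (E.erase s(u,v))).Reachable u x) := by
  set R := (HG (E.erase s(u,v))).Reachable with hR
  induction p with
  | nil => exact Or.inl (Reachable.refl _)
  | @cons w y x h q ih =>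
    rw [HG_adj] at h
    by_cases he : s(w,y) = s(u,v)
    · rw [Sym2.eq_iff] at he
      rcases he with ⟨rfl, rfl⟩ | ⟨rfl, rfl⟩
      · rcases ih with h1 | ⟨h1, h2⟩ | ⟨h1, h2⟩
        · exact Or.inr (Or.inl ⟨Reachable.refl _, h1⟩)
        · exact Or.inr (Or.inl ⟨Reachable.refl _, h2⟩)
        · exact Or.inl h2
      · rcases ih with h1 | ⟨h1, h2⟩ | ⟨h1, h2⟩
        · exact Or.inr (Or.inr ⟨Reachable.refl _, h1⟩)
        · exact Or.inl h2
        · exact Or.inr (Or.inr ⟨Reachable.refl _, h2⟩)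
    · have hwy : R w y := by
        exact Reachable.mono (le_refl _) (SimpleGraph.Adj.reachable (by
          rw [HG_adj]; exact ⟨Finset.mem_erase.mpr ⟨he, h.1⟩, h.2⟩))
      rcases ih with h1 | ⟨h1, h2⟩ | ⟨h1, h2⟩
      · exact Or.inl (hwy.trans h1)
      · exact Or.inr (Or.inl ⟨hwy.trans h1, h2⟩)
      · exact Or.inr (Or.inr ⟨hwy.trans h1, h2⟩)


-- h2 : deleting a tree edge separates its endpoints
lemma not_reach_erase {E : Finset (Sym2 V)} (hT : (HG E).IsTree) {u v : V}
    (he : s(u,v) ∈ E) (huv : u ≠ v) :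
    ¬ (HG (E.erase s(u,v))).Reachable u v := by
  intro hr
  have hle : HG (E.erase s(u,v)) ≤ HG E \ SimpleGraph.fromEdgeSet {s(u,v)} := by
    intro a b hab
    rw [HG_adj] at hab
    constructor
    · rw [HG_adj]; exact ⟨Finset.mem_erase.mp hab.1 |>.2, hab.2⟩
    · rw [fromEdgeSet_adj]
      rintro ⟨h1, -⟩
      exact (Finset.mem_erase.mp hab.1).1 h1
  have hadj : (HG E).Adj u v := HG_adj.mpr ⟨he, huv⟩
  obtain ⟨x, c, hc, -⟩ := (adj_and_reachable_delete_edges_iff_exists_cycle).mp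
    ⟨hadj, hr.mono hle⟩
  exact hT.IsAcyclic c hc


-- h3 : an edge on a trail separates the trail's endpoints upon deletion (in a tree)
lemma not_reach_erase_of_mem_edges {E : Finset (Sym2 V)} (hT : (HG E).IsTree) {x y : V}
    (p : (HG E).Walk x y) (hp : p.IsTrail) {f : Sym2 V} (hf : f ∈ p.edges) :
    ¬ (HG (E.erase f)).Reachable x y := by
  induction p with
  | nil => simp at hf
  | @cons x z y h q ih =>
    have hq : q.IsTrail := hp.of_cons
    have hnd : (s(x,z) :: q.edges).Nodup := hp.edges_nodup
    rw [SimpleGraph.Walk.edges_cons] at hf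
    have hxz := HG_adj.mp h
    rcases List.mem_cons.mp hf with rfl | hfq
    · -- f = s(x,z); q avoids f
      intro hr
      have hqe : ∀ e ∈ q.edges, e ∈ (HG (E.erase s(x,z))).edgeSet := by
        intro e he
        have he1 : e ∈ (HG E).edgeSet := q.edges_subset_edgeSet he
        have hne : e ≠ s(x,z) := fun h' => (List.nodup_cons.mp hnd).1 (h' ▸ he)
        rw [HG, edgeSet_fromEdgeSet] at he1 ⊢
        refine ⟨?_, he1.2⟩
        simp only [Finset.coe_erase, Set.mem_diff, Set.mem_singleton_iff]
        exact ⟨he1.1, hne⟩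
      have hzy : (HG (E.erase s(x,z))).Reachable z y := (q.transfer _ hqe).reachable
      exact not_reach_erase hT hxz.1 hxz.2 (hr.trans hzy.symm)
    · intro hr
      have hne : s(x,z) ≠ f := fun h' => (List.nodup_cons.mp hnd).1 (h' ▸ hfq)
      have hxz' : (HG (E.erase f)).Reachable x z :=
        (SimpleGraph.Adj.reachable (HG_adj.mpr ⟨Finset.mem_erase.mpr ⟨hne, hxz.1⟩, hxz.2⟩))
      exact ih hq hfq (hxz'.symm.trans hr)

-- h4 : crossing lemma
lemma exists_crossing_edge {H : SimpleGraph V} {x y : V} (p : H.Walk x y)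
    (S : V → Prop) (hx : S x) (hy : ¬ S y) :
    ∃ a b : V, H.Adj a b ∧ s(a,b) ∈ p.edges ∧ S a ∧ ¬ S b := by
  classical
  induction p with
  | nil => exact absurd hx hy
  | @cons x z y h q ih =>
    by_cases hz : S z
    · obtain ⟨a, b, h1, h2, h3, h4⟩ := ih hz hy
      exact ⟨a, b, h1, by simp [h2], h3, h4⟩
    · exact ⟨x, z, h, by simp, hx, hz⟩


-- reachability survives deleting an edge whose endpoints stay reachable
lemma reach_delete {H : SimpleGraph V} {x y : V}
    (hr : (H \ SimpleGraph.fromEdgeSet {s(x,y)}).Reachable x y) {p q : V} (w : H.Walk p q) :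
    (H \ SimpleGraph.fromEdgeSet {s(x,y)}).Reachable p q := by
  induction w with
  | nil => exact Reachable.refl _
  | @cons p z q h w ih =>
    refine Reachable.trans ?_ ih
    by_cases he : s(p,z) = s(x,y)
    · rw [Sym2.eq_iff] at he
      rcases he with ⟨rfl, rfl⟩ | ⟨rfl, rfl⟩
      · exact hr
      · exact hr.symm
    · refine SimpleGraph.Adj.reachable ?_
      refine ⟨h, ?_⟩
      rw [fromEdgeSet_adj]
      rintro ⟨h1, -⟩
      simp only [Set.mem_singleton_iff] at h1
      exact he h1

-- spanning tree existence
lemma exists_spanning_tree (H : SimpleGraph V) (hc : H.Connected) :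
    ∃ T ≤ H, T.IsTree := by
  classical
  suffices h : ∀ n (H : SimpleGraph V), H.edgeSet.ncard ≤ n → H.Connected → ∃ T ≤ H, T.IsTree by
    exact h H.edgeSet.ncard H le_rfl hc
  intro n
  induction n with
  | zero =>
    intro H hn hc
    by_cases ha : H.IsAcyclic
    · exact ⟨H, le_rfl, ⟨hc, ha⟩⟩
    · exfalso
      rw [SimpleGraph.IsAcyclic] at ha
      push_neg at ha
      obtain ⟨v, c, hcyc⟩ := ha
      cases c with
      | nil => exact hcyc.ne_nil rfl
      | cons h q =>
        have : s(v, _) ∈ H.edgeSet := h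
        have hpos : 0 < H.edgeSet.ncard :=
          Set.ncard_pos (Set.toFinite _) |>.mpr ⟨_, this⟩
        omega
  | succ n ih =>
    intro H hn hc
    by_cases ha : H.IsAcyclic
    · exact ⟨H, le_rfl, ⟨hc, ha⟩⟩
    · rw [SimpleGraph.IsAcyclic] at ha
      push_neg at ha
      obtain ⟨v, c, hcyc⟩ := ha
      cases c with
      | nil => exact absurd rfl hcyc.ne_nil
      | @cons _ z _ h q =>
        set H' := H \ SimpleGraph.fromEdgeSet {s(v,z)} with hH'
        have hmem : s(v,z) ∈ (SimpleGraph.Walk.cons h q).edges := by simp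
        have hr : H'.Reachable v z := by
          have := (adj_and_reachable_delete_edges_iff_exists_cycle).mpr
            ⟨v, SimpleGraph.Walk.cons h q, hcyc, hmem⟩
          exact this.2
        have hc' : H'.Connected := by
          have hne := hc.nonempty
          refine ⟨fun a b => ?_⟩
          obtain ⟨w⟩ := hc.preconnected a b
          exact reach_delete hr w
        have hes : H'.edgeSet = H.edgeSet \ {s(v,z)} := by
          have hsingle : ({s(v,z)} : Set (Sym2 V)) \ {e | e.IsDiag} = {s(v,z)} := by
            ext e
            simp only [Set.mem_diff, Set.mem_singleton_iff, Set.mem_setOf_eq,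
              and_iff_left_iff_imp]
            rintro rfl
            simpa using h.ne
          rw [hH', edgeSet_sdiff, edgeSet_fromEdgeSet]
          exact congrArg (H.edgeSet \ ·) hsingle
        have hcard : H'.edgeSet.ncard ≤ n := by
          have hvz : s(v,z) ∈ H.edgeSet := h
          have := Set.ncard_diff_singleton_lt_of_mem hvz (Set.toFinite _)
          rw [← hes] at this
          omega
        obtain ⟨T, hT1, hT2⟩ := ih H' hcard hc'
        exact ⟨T, le_trans hT1 sdiff_le, hT2⟩

-- cardinality of a tree's edge finset (ncard version)
lemma tree_ncard {H : SimpleGraph V} (hT : H.IsTree) :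
    H.edgeSet.ncard + 1 = Fintype.card V := by
  classical
  have : Fintype H.edgeSet := (Set.toFinite _).fintype
  have h := hT.card_edgeFinset
  rwa [SimpleGraph.edgeFinset, ← Set.ncard_eq_toFinset_card'] at h

lemma HG_card {E : Finset (Sym2 V)} (hnd : ∀ x ∈ E, ¬ x.IsDiag) (hT : (HG E).IsTree) :
    E.card + 1 = Fintype.card V := by
  have := tree_ncard hT
  rwa [HG_edgeSet hnd, Set.ncard_coe_finset] at this

-- converse: connected + right card → tree
lemma tree_of_connected_card {E : Finset (Sym2 V)} (hnd : ∀ x ∈ E, ¬ x.IsDiag)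
    (hc : (HG E).Connected) (hcard : E.card + 1 = Fintype.card V) : (HG E).IsTree := by
  obtain ⟨T, hle, hT⟩ := exists_spanning_tree _ hc
  have h1 : T.edgeSet ⊆ (HG E).edgeSet := SimpleGraph.edgeSet_mono hle
  have h2 : (HG E).edgeSet.ncard ≤ T.edgeSet.ncard := by
    have := tree_ncard hT
    rw [HG_edgeSet hnd, Set.ncard_coe_finset]
    omega
  have := Set.eq_of_subset_of_ncard_le h1 h2 (Set.toFinite _)
  rw [SimpleGraph.edgeSet_inj] at this
  rwa [← this]


-- every vertex is on one of the two sides of a deleted tree edge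
lemma side_of_erase {E : Finset (Sym2 V)} (hT : (HG E).IsTree) {a b : V}
    (hf : s(a,b) ∈ E) (w : V) :
    (HG (E.erase s(a,b))).Reachable w a ∨ (HG (E.erase s(a,b))).Reachable w b := by
  obtain ⟨p⟩ := hT.isConnected.preconnected w a
  rcases walk_cases (u := a) (v := b) p with h | ⟨h1, h2⟩ | ⟨h1, h2⟩
  · exact Or.inl h
  · exact Or.inl h1
  · exact Or.inr h1

-- h9 : replacing a tree edge by another edge across the same cut gives a tree
lemma insert_tree {E : Finset (Sym2 V)} (hnd : ∀ x ∈ E, ¬ x.IsDiag) (hT : (HG E).IsTree)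
    {u v a b : V} (hf : s(a,b) ∈ E)
    (hu : (HG (E.erase s(a,b))).Reachable u a) (hv : (HG (E.erase s(a,b))).Reachable v b) :
    (HG (insert s(u,v) (E.erase s(a,b)))).IsTree := by
  have hab : a ≠ b := by
    intro h; exact (hnd _ hf) (by simp [h])
  have hnab : ¬ (HG (E.erase s(a,b))).Reachable a b := not_reach_erase hT hf hab
  have huv : u ≠ v := by
    rintro rfl
    exact hnab (hu.symm.trans hv)
  have hnotmem : s(u,v) ∉ E.erase s(a,b) := by
    intro hmem
    exact hnab (hu.symm.trans ((SimpleGraph.Adj.reachable (HG_adj.mpr ⟨hmem, huv⟩)).trans hv))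
  have hnd' : ∀ x ∈ insert s(u,v) (E.erase s(a,b)), ¬ x.IsDiag := by
    intro x hx
    rcases Finset.mem_insert.mp hx with rfl | hx
    · simpa using huv
    · exact hnd x (Finset.erase_subset _ _ hx)
  have hle : HG (E.erase s(a,b)) ≤ HG (insert s(u,v) (E.erase s(a,b))) :=
    HG_mono (Finset.subset_insert _ _)
  have hadj : (HG (insert s(u,v) (E.erase s(a,b)))).Adj u v :=
    HG_adj.mpr ⟨Finset.mem_insert_self _ _, huv⟩
  refine tree_of_connected_card hnd' ?_ ?_
  · have hne := hT.isConnected.nonempty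
    have hreach : ∀ w, (HG (insert s(u,v) (E.erase s(a,b)))).Reachable w u := by
      intro w
      rcases side_of_erase hT hf w with h | h
      · exact (h.mono hle).trans ((hu.mono hle).symm)
      · exact ((h.mono hle).trans ((hv.mono hle).symm)).trans hadj.symm.reachable
    exact ⟨fun x y => (hreach x).trans (hreach y).symm⟩
  · rw [Finset.card_insert_of_notMem hnotmem,
      Finset.card_erase_of_mem hf]
    have := HG_card hnd hT
    have hpos : 0 < E.card := by
      rcases Finset.eq_empty_or_nonempty E with rfl | h
      · simp at hf
      · exact Finset.card_pos.mpr h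
    omega

-- core exchange lemma
lemma exchange {E1 E2 : Finset (Sym2 V)} (hnd1 : ∀ x ∈ E1, ¬ x.IsDiag)
    (hnd2 : ∀ x ∈ E2, ¬ x.IsDiag) (hT1 : (HG E1).IsTree) (hT2 : (HG E2).IsTree)
    {e : Sym2 V} (he1 : e ∈ E1) (he2 : e ∉ E2) :
    ∃ f ∈ E2, f ∉ E1 ∧ (HG (insert f (E1.erase e))).IsTree ∧
      (HG (insert e (E2.erase f))).IsTree := by
  obtain ⟨u, v, rfl⟩ : ∃ u v, e = s(u,v) := Sym2.ind (fun a b => ⟨a, b, rfl⟩) e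
  have huv : u ≠ v := by intro h; exact (hnd1 _ he1) (by simp [h])
  set R1 := (HG (E1.erase s(u,v))).Reachable with hR1
  have hnuv : ¬ R1 u v := not_reach_erase hT1 he1 huv
  obtain ⟨p, hp, -⟩ := hT2.existsUnique_path u v
  obtain ⟨a, b, hadj, hmem, hSa, hSb⟩ :=
    exists_crossing_edge p (fun w => R1 u w) (Reachable.refl _) hnuv
  have hfE2 : s(a,b) ∈ E2 := (HG_adj.mp hadj).1
  have hne : a ≠ b := (HG_adj.mp hadj).2
  have hfe : s(a,b) ≠ s(u,v) := by
    rintro h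
    rw [h] at hfE2
    exact he2 hfE2
  have hfE1 : s(a,b) ∉ E1 := by
    intro h
    have : R1 a b := SimpleGraph.Adj.reachable
      (HG_adj.mpr ⟨Finset.mem_erase.mpr ⟨hfe, h⟩, hne⟩)
    exact hSb (hSa.trans this)
  refine ⟨s(a,b), hfE2, hfE1, ?_, ?_⟩
  · -- insert f (E1.erase e) tree: apply insert_tree with E1, erased edge s(u,v), inserted s(a,b)
    have hbv : R1 b v := by
      rcases side_of_erase hT1 he1 b with h | h
      · exact absurd h.symm hSb
      · exact h
    exact insert_tree hnd1 hT1 he1 hSa.symm hbv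
  · -- insert e (E2.erase f) tree
    set R2 := (HG (E2.erase s(a,b))).Reachable with hR2
    have hnR2 : ¬ R2 u v := not_reach_erase_of_mem_edges hT2 p hp.isTrail hmem
    have hu2 := side_of_erase hT2 hfE2 u
    have hv2 := side_of_erase hT2 hfE2 v
    have hnab : ¬ R2 a b := not_reach_erase hT2 hfE2 hne
    rcases hu2 with hua | hub
    · rcases hv2 with hva | hvb
      · exact absurd (hua.trans hva.symm) hnR2
      · exact insert_tree hnd2 hT2 hfE2 hua hvb
    · rcases hv2 with hva | hvb
      · have := insert_tree hnd2 hT2 hfE2 hva hub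
        rwa [Sym2.eq_swap] at this
      · exact absurd (hub.trans hvb.symm) hnR2


-- swap equivalence between subtypes
def swapEquiv {α : Type*} [DecidableEq α] (s : Finset α) (a b : α) (ha : a ∉ s) (hb : b ∈ s) :
    {x // x ∈ insert a (s.erase b)} ≃ {x // x ∈ s} where
  toFun x := if h : (x : α) = a then ⟨b, hb⟩ else
    ⟨(x : α), Finset.mem_of_mem_erase ((Finset.mem_insert.mp x.2).resolve_left h)⟩
  invFun y := if h : (y : α) = b then ⟨a, Finset.mem_insert_self _ _⟩ else
    ⟨(y : α), Finset.mem_insert_of_mem (Finset.mem_erase.mpr ⟨h, y.2⟩)⟩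
  left_inv x := by
    by_cases h : (x : α) = a
    · simp only [h, dif_pos]
      exact Subtype.ext h.symm
    · simp only [dif_neg h]
      have hxb : (x : α) ≠ b :=
        (Finset.mem_erase.mp ((Finset.mem_insert.mp x.2).resolve_left h)).1
      rw [dif_neg hxb]
  right_inv y := by
    by_cases h : (y : α) = b
    · simp only [h, dif_pos]
      exact Subtype.ext h.symm
    · simp only [dif_neg h]
      have hya : (y : α) ≠ a := fun hh => ha (hh ▸ y.2)
      rw [dif_neg hya]

lemma swapEquiv_coe {α : Type*} [DecidableEq α] (s : Finset α) (a b : α) (ha : a ∉ s)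
    (hb : b ∈ s) (x : {x // x ∈ insert a (s.erase b)}) :
    ((swapEquiv s a b ha hb x : α)) = if (x : α) = a then b else (x : α) := by
  by_cases h : (x : α) = a
  · simp [swapEquiv, h]
  · simp [swapEquiv, h]


lemma key (E1 : Finset (Sym2 V)) (hnd1 : ∀ x ∈ E1, ¬ x.IsDiag) (hT1 : (HG E1).IsTree) :
    ∀ n (E2 : Finset (Sym2 V)), (∀ x ∈ E2, ¬ x.IsDiag) → (HG E2).IsTree →
    (E2 \ E1).card ≤ n →
    ∃ ψ : {e // e ∈ E1} ≃ {e // e ∈ E2},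
      (∀ x : {e // e ∈ E1}, (HG (insert ((ψ x : Sym2 V)) (E1.erase (x : Sym2 V)))).IsTree) ∧
      (∀ x : {e // e ∈ E1}, (x : Sym2 V) ∈ E2 → ((ψ x : Sym2 V)) = (x : Sym2 V)) := by
  have base : ∀ (E2 : Finset (Sym2 V)), E1 = E2 →
      ∃ ψ : {e // e ∈ E1} ≃ {e // e ∈ E2},
      (∀ x : {e // e ∈ E1}, (HG (insert ((ψ x : Sym2 V)) (E1.erase (x : Sym2 V)))).IsTree) ∧
      (∀ x : {e // e ∈ E1}, (x : Sym2 V) ∈ E2 → ((ψ x : Sym2 V)) = (x : Sym2 V)) := by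
    rintro E2 rfl
    refine ⟨Equiv.refl _, fun x => ?_, fun x _ => rfl⟩
    rw [Equiv.refl_apply, Finset.insert_erase x.2]
    exact hT1
  intro n
  induction n with
  | zero =>
    intro E2 hnd2 hT2 hle
    have hsub : E2 ⊆ E1 := by
      intro x hx
      by_contra hx1
      have : x ∈ E2 \ E1 := Finset.mem_sdiff.mpr ⟨hx, hx1⟩
      have := Finset.card_pos.mpr ⟨x, this⟩
      omega
    have heq : E1 = E2 := by
      refine (Finset.eq_of_subset_of_card_le hsub ?_).symm
      have h1 := HG_card hnd1 hT1
      have h2 := HG_card hnd2 hT2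
      omega
    exact base E2 heq
  | succ n ih =>
    intro E2 hnd2 hT2 hle
    by_cases heq : E1 = E2
    · exact base E2 heq
    · -- find e ∈ E1 \ E2
      have hcards : E1.card = E2.card := by
        have h1 := HG_card hnd1 hT1
        have h2 := HG_card hnd2 hT2
        omega
      have hne : ¬ E1 ⊆ E2 := fun hsub => heq (Finset.eq_of_subset_of_card_le hsub hcards.ge)
      obtain ⟨e, he1, he2⟩ := Finset.not_subset.mp hne
      obtain ⟨f, hf2, hf1, htree1, htree2⟩ := exchange hnd1 hnd2 hT1 hT2 he1 he2
      set E2' := insert e (E2.erase f) with hE2'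
      have hnd2' : ∀ x ∈ E2', ¬ x.IsDiag := by
        intro x hx
        rcases Finset.mem_insert.mp hx with rfl | hx
        · exact hnd1 x he1
        · exact hnd2 x (Finset.erase_subset _ _ hx)
      have hcard' : (E2' \ E1).card ≤ n := by
        have hsd : E2' \ E1 = (E2 \ E1).erase f := by
          ext x
          simp only [hE2', Finset.mem_sdiff, Finset.mem_insert, Finset.mem_erase]
          constructor
          · rintro ⟨rfl | ⟨hxf, hx2⟩, hx1⟩
            · exact absurd he1 hx1
            · exact ⟨hxf, hx2, hx1⟩
          · rintro ⟨hxf, hx2, hx1⟩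
            exact ⟨Or.inr ⟨hxf, hx2⟩, hx1⟩
        rw [hsd, Finset.card_erase_of_mem (Finset.mem_sdiff.mpr ⟨hf2, hf1⟩)]
        omega
      obtain ⟨ψ', hψ'tree, hψ'fix⟩ := ih E2' hnd2' htree2 hcard'
      have henotin : e ∉ E2 := he2
      set g := swapEquiv E2 e f henotin hf2 with hg
      refine ⟨ψ'.trans g, ?_, ?_⟩
      · intro x
        rw [Equiv.trans_apply, hg, swapEquiv_coe]
        by_cases h : ((ψ' x : Sym2 V)) = e
        · rw [if_pos h]
          -- then x = ⟨e, he1⟩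
          have hxe : (x : Sym2 V) = e := by
            have h1 : ((ψ' ⟨e, he1⟩ : Sym2 V)) = e :=
              hψ'fix ⟨e, he1⟩ (Finset.mem_insert_self _ _)
            have : ψ' x = ψ' ⟨e, he1⟩ := Subtype.ext (h.trans h1.symm)
            have := ψ'.injective this
            exact congrArg Subtype.val this
          rw [hxe]
          exact htree1
        · rw [if_neg h]
          exact hψ'tree x
      · intro x hx
        rw [Equiv.trans_apply, hg, swapEquiv_coe]
        have hxf : (x : Sym2 V) ≠ f := fun hh => hf1 (hh ▸ x.2)
        have hx2' : (x : Sym2 V) ∈ E2' :=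
          Finset.mem_insert_of_mem (Finset.mem_erase.mpr ⟨hxf, hx⟩)
        have hfix := hψ'fix x hx2'
        rw [hfix, if_neg (fun hh : (x : Sym2 V) = e => henotin (hh ▸ hx))]

end Helpers

theorem stmt_7 (V : Type*) [Fintype V] [DecidableEq V]
    (G : SimpleGraph V) (c : Sym2 V → ℝ) (hc : ∀ e, 0 < c e)
    (E1 E2 : Finset (Sym2 V))
    (hE1 : ↑E1 ⊆ G.edgeSet) (hE2 : ↑E2 ⊆ G.edgeSet)
    (hT1 : (SimpleGraph.fromEdgeSet (↑E1 : Set (Sym2 V))).IsTree)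
    (hT2 : (SimpleGraph.fromEdgeSet (↑E2 : Set (Sym2 V))).IsTree)
    (hmin : ∀ E : Finset (Sym2 V), ↑E ⊆ G.edgeSet →
      (SimpleGraph.fromEdgeSet (↑E : Set (Sym2 V))).IsTree →
      ∑ e ∈ E1, c e ≤ ∑ e ∈ E, c e) :
    ∃ ψ : {e // e ∈ E1} ≃ {e // e ∈ E2},
      (∀ e : {e // e ∈ E1},
        (SimpleGraph.fromEdgeSet
          (↑(insert ((ψ e : Sym2 V)) (E1.erase (e : Sym2 V))) : Set (Sym2 V))).IsTree) ∧
      ∏ e ∈ E1, c e ≤ ∏ e ∈ E2, c e := by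
  classical
  have hnd1 : ∀ x ∈ E1, ¬ x.IsDiag := fun x hx => G.not_isDiag_of_mem_edgeSet (hE1 hx)
  have hnd2 : ∀ x ∈ E2, ¬ x.IsDiag := fun x hx => G.not_isDiag_of_mem_edgeSet (hE2 hx)
  have hT1' : (HG E1).IsTree := hT1
  have hT2' : (HG E2).IsTree := hT2
  obtain ⟨ψ, htree, -⟩ := key E1 hnd1 hT1' (E2 \ E1).card E2 hnd2 hT2' le_rfl
  refine ⟨ψ, fun x => htree x, ?_⟩
  -- pointwise cost inequality
  have hcle : ∀ x : {e // e ∈ E1}, c (x : Sym2 V) ≤ c ((ψ x : Sym2 V)) := by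
    intro x
    set E' := insert ((ψ x : Sym2 V)) (E1.erase (x : Sym2 V)) with hE'
    have htx : (HG E').IsTree := htree x
    have hndE' : ∀ y ∈ E', ¬ y.IsDiag := by
      intro y hy
      rcases Finset.mem_insert.mp hy with rfl | hy
      · exact hnd2 _ (ψ x).2
      · exact hnd1 y (Finset.erase_subset _ _ hy)
    have hnotin : ((ψ x : Sym2 V)) ∉ E1.erase (x : Sym2 V) := by
      intro hmem
      have heq : E' = E1.erase (x : Sym2 V) := Finset.insert_eq_self.mpr hmem
      have h1 := HG_card hndE' htx
      have h2 := HG_card hnd1 hT1'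
      rw [heq, Finset.card_erase_of_mem x.2] at h1
      have hpos : 0 < E1.card := Finset.card_pos.mpr ⟨_, x.2⟩
      omega
    have hsubG : (↑E' : Set (Sym2 V)) ⊆ G.edgeSet := by
      intro y hy
      rcases Finset.mem_insert.mp hy with rfl | hy
      · exact hE2 (ψ x).2
      · exact hE1 (Finset.erase_subset _ _ hy)
    have hsum := hmin E' hsubG htx
    rw [hE', Finset.sum_insert hnotin] at hsum
    have hsplit : c (x : Sym2 V) + ∑ e ∈ E1.erase (x : Sym2 V), c e = ∑ e ∈ E1, c e :=
      Finset.add_sum_erase E1 c x.2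
    linarith
  calc ∏ e ∈ E1, c e = ∏ x : {e // e ∈ E1}, c (x : Sym2 V) :=
        (Finset.prod_coe_sort E1 c).symm
    _ ≤ ∏ x : {e // e ∈ E1}, c ((ψ x : Sym2 V)) :=
        Finset.prod_le_prod (fun i _ => (hc _).le) (fun i _ => hcle i)
    _ = ∏ y : {e // e ∈ E2}, c (y : Sym2 V) := Equiv.prod_comp ψ (fun y => c (y : Sym2 V))
    _ = ∏ e ∈ E2, c e := Finset.prod_coe_sort E2 c
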